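/- Let M be a compact metric space and φ: M → M continuous, and let Q be a φ-ergodic Borel probability measure. Let G = {G_n} be an asymptotically additive sequence of bounded Borel functions on M. Then for Q-almost every x ∈ M, lim_{n→∞} (1/n) G_n(x) = G(Q), where G(Q) = lim_{n→∞} (1/n) ∫ G_n dQ. -/

import Mathlib

open MeasureTheory Filter Topology Set
open scoped ENNReal

variable {M : Type*} [MetricSpace M] [CompactSpace M] [MeasurableSpace M] [BorelSpace M]

/-- Birkhoff sum `S_n V = ∑_{j<n} V ∘ φ^j`. -/
noncomputable def birkhoff (φ : M → M) (V : M → ℝ) (n : ℕ) (x : M) : ℝ :=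
  ∑ j ∈ Finset.range n, V (φ^[j] x)

/-- Supremum norm `‖f‖_∞` valued in `ℝ≥0∞`. -/
noncomputable def supNorm (f : M → ℝ) : ℝ≥0∞ :=
  ⨆ x : M, ENNReal.ofReal |f x|

/-- `Gk` is an approximating sequence for `G`:
`lim_{k→∞} limsup_{n→∞} (1/n) ‖G_n − S_n G^{(k)}‖_∞ = 0`. -/
def ApproxSeq (φ : M → M) (G : ℕ → M → ℝ) (Gk : ℕ → M → ℝ) : Prop :=
  Tendsto
    (fun k => Filter.limsup
      (fun n => supNorm (fun x => G n x - birkhoff φ (Gk k) n x) / (n : ℝ≥0∞)) atTop)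
    atTop (nhds 0)

/-- `G = {G_n}` is an asymptotically additive sequence of bounded Borel functions. -/
def AsympAdd (φ : M → M) (G : ℕ → M → ℝ) : Prop :=
  (∀ n, Measurable (G n) ∧ ∃ C : ℝ, ∀ x, |G n x| ≤ C) ∧
  ∃ Gk : ℕ → M → ℝ, (∀ k, Continuous (Gk k)) ∧ ApproxSeq φ G Gk

/-- Bowen ball `B_n(x, ε)`. -/
def bowenBall (φ : M → M) (n : ℕ) (x : M) (ε : ℝ) : Set M :=
  {y | ∀ k < n, dist (φ^[k] y) (φ^[k] x) < ε}

/-- `E` is `(ε,n)`-spanning. -/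
def IsSpanning (φ : M → M) (n : ℕ) (ε : ℝ) (E : Finset M) : Prop :=
  ∀ x : M, ∃ y ∈ E, x ∈ bowenBall φ n y ε

/-- `E` is `(ε,n)`-separated. -/
def IsSeparated (φ : M → M) (n : ℕ) (ε : ℝ) (E : Finset M) : Prop :=
  ∀ x ∈ E, ∀ y ∈ E, x ≠ y → x ∉ bowenBall φ n y ε

/-- `S(G,ε,n)`. -/
noncomputable def spanSum (φ : M → M) (G : ℕ → M → ℝ) (ε : ℝ) (n : ℕ) : ℝ≥0∞ :=
  ⨅ (E : Finset M) (_ : IsSpanning φ n ε E), ∑ x ∈ E, ENNReal.ofReal (Real.exp (G n x))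

/-- `N(G,ε,n)`. -/
noncomputable def sepSum (φ : M → M) (G : ℕ → M → ℝ) (ε : ℝ) (n : ℕ) : ℝ≥0∞ :=
  ⨆ (E : Finset M) (_ : IsSeparated φ n ε E), ∑ x ∈ E, ENNReal.ofReal (Real.exp (G n x))

/-- Topological pressure of an asymptotically additive sequence, via `(ε,n)`-separated sets. -/
noncomputable def pressure (φ : M → M) (G : ℕ → M → ℝ) : EReal :=
  ⨆ (ε : ℝ) (_ : 0 < ε),
    Filter.limsup (fun n : ℕ => (((n : ℝ)⁻¹ : ℝ) : EReal) * ENNReal.log (sepSum φ G ε n)) atTop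

/-- Entropy of the partition of `M` induced by a map into a finite type. -/
noncomputable def mapEntropy (μ : Measure M) {α : Type} [Fintype α] (c : M → α) : ℝ :=
  ∑ a : α, Real.negMulLog ((μ (c ⁻¹' {a})).toReal)

/-- Kolmogorov–Sinai entropy of `φ` along a finite partition `P` (encoded as `P : M → Fin m`). -/
noncomputable def partKS (φ : M → M) (μ : Measure M) {m : ℕ} (P : M → Fin m) : ℝ :=
  ⨅ n : ℕ, ((n : ℝ) + 1)⁻¹ *
    mapEntropy μ (fun x => fun i : Fin (n + 1) => P (φ^[(i : ℕ)] x))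

/-- Kolmogorov–Sinai entropy `h_φ(μ)`. -/
noncomputable def ksEntropy (φ : M → M) (μ : Measure M) : ℝ≥0∞ :=
  ⨆ (m : ℕ) (P : M → Fin m) (_ : Measurable P), ENNReal.ofReal (partKS φ μ P)

/-- Set of `n`-periodic points of `φ`. -/
def perSet (φ : M → M) (n : ℕ) : Set M := {x | φ^[n] x = x}

/-- `Z_n(G) = ∑_{x ∈ M_n} e^{G_n(x)}`, as an extended nonnegative real. -/
noncomputable def perPartition (φ : M → M) (G : ℕ → M → ℝ) (n : ℕ) : ℝ≥0∞ :=
  ∑' x : perSet φ n, ENNReal.ofReal (Real.exp (G n x))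

/-- The periodic-orbit measure `P_n = Z_n⁻¹ ∑_{x ∈ M_n} e^{G_n(x)} δ_x`. -/
noncomputable def perGibbs (φ : M → M) (G : ℕ → M → ℝ) (n : ℕ) : Measure M :=
  (perPartition φ G n)⁻¹ •
    Measure.sum (fun x : perSet φ n => ENNReal.ofReal (Real.exp (G n x)) • Measure.dirac (x : M))

/-- Weak periodic specification property. -/
def WPS (φ : M → M) : Prop :=
  ∃ m : ℝ → ℕ → ℕ, ∃ N : ℝ → ℕ,
    (∀ δ : ℝ, 0 < δ → ∀ n, N δ ≤ n → m δ n < n) ∧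
    (∀ δ : ℝ, 0 < δ → ∀ n, N δ ≤ n → ∀ x : M,
      ∃ y ∈ perSet φ n, y ∈ bowenBall φ (n - m δ n) x δ) ∧
    Tendsto (fun δ : ℝ => Filter.limsup (fun n => (m δ n : ℝ≥0∞) / (n : ℝ≥0∞)) atTop)
      (𝓝[>] (0 : ℝ)) (nhds 0)

/-- Specification property (S). -/
def SpecProp (φ : M → M) : Prop :=
  ∀ δ : ℝ, 0 < δ → ∃ N : ℕ, ∀ (r : ℕ) (a b : Fin r → ℕ) (pts : Fin r → M),
    (∀ i, a i ≤ b i) →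
    (∀ i j, i ≠ j → ∀ k, a i ≤ k → k ≤ b i → ∀ l, a j ≤ l → l ≤ b j → N ≤ Nat.dist k l) →
    ∃ x : M, ∀ i, ∀ k, a i ≤ k → k ≤ b i → dist (φ^[k] x) (φ^[k] (pts i)) < δ

/-- Condition (PAP): finitely many periodic points and periodic approximation of pressure. -/
def PAP (φ : M → M) : Prop :=
  (∀ n : ℕ, 0 < n → (perSet φ n).Finite) ∧
  ∀ G : ℕ → M → ℝ, AsympAdd φ G →
    Tendsto (fun n : ℕ => (((n : ℝ)⁻¹ : ℝ) : EReal) * ENNReal.log (perPartition φ G n)) atTop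
      (nhds (pressure φ G))

/-- Condition (USCE): finite topological entropy and upper semicontinuous entropy map. -/
def USCE (φ : M → M) : Prop :=
  pressure φ (fun _ _ => (0 : ℝ)) ≠ ⊤ ∧
  UpperSemicontinuousOn (fun μ : ProbabilityMeasure M => ksEntropy φ (μ : Measure M))
    {μ : ProbabilityMeasure M | (μ : Measure M).map φ = (μ : Measure M)}

/-- Empirical measure `μ_n^x`. -/
noncomputable def empMeas (φ : M → M) (n : ℕ) (x : M) : Measure M :=
  ((n : ℝ≥0∞))⁻¹ • ∑ i ∈ Finset.range n, Measure.dirac (φ^[i] x)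

/-- Weak Gibbs property of `P` for `G`, with (finite, real) pressure `p`. -/
def WeakGibbs (φ : M → M) (G : ℕ → M → ℝ) (p : ℝ) (P : Measure M) : Prop :=
  ∃ K : ℕ → ℝ → ℝ,
    (∀ n : ℕ, ∀ ε : ℝ, 0 < ε → 1 ≤ K n ε) ∧
    (∀ n : ℕ, 0 < n → ∀ ε : ℝ, 0 < ε → ∀ x : M,
      ENNReal.ofReal (Real.exp (G n x - n * p)) / ENNReal.ofReal (K n ε)
          ≤ P (bowenBall φ n x ε) ∧
      P (bowenBall φ n x ε)
          ≤ ENNReal.ofReal (K n ε) * ENNReal.ofReal (Real.exp (G n x - n * p))) ∧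
    Tendsto (fun ε : ℝ => Filter.limsup (fun n => ENNReal.ofReal (Real.log (K n ε) / n)) atTop)
      (𝓝[>] (0 : ℝ)) (nhds 0)



section AAETAux
open Pointwise
set_option linter.unusedSectionVars false

lemma myBddU {u : ℕ → ℝ} {C : ℝ} (h : ∀ n, |u n| ≤ C) :
    IsBoundedUnder (· ≤ ·) atTop u :=
  ⟨C, Filter.eventually_map.2 (Eventually.of_forall fun n => (abs_le.1 (h n)).2)⟩

lemma myBddL {u : ℕ → ℝ} {C : ℝ} (h : ∀ n, |u n| ≤ C) :
    IsBoundedUnder (· ≥ ·) atTop u :=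
  ⟨-C, Filter.eventually_map.2 (Eventually.of_forall fun n => (abs_le.1 (h n)).1)⟩

lemma myCobdd {u : ℕ → ℝ} {C : ℝ} (h : ∀ n, |u n| ≤ C) :
    IsCoboundedUnder (· ≤ ·) atTop u :=
  (myBddL h).isCoboundedUnder_flip

lemma limsup_le_limsup_of_tendsto_sub {u v : ℕ → ℝ} {C : ℝ}
    (hu : ∀ n, |u n| ≤ C) (hv : ∀ n, |v n| ≤ C)
    (h : Tendsto (fun n => u n - v n) atTop (𝓝 0)) :
    limsup u atTop ≤ limsup v atTop := by
  refine le_of_forall_pos_le_add fun δ hδ => ?_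
  have h1 : ∀ᶠ n in atTop, u n - v n < δ / 2 := h.eventually (gt_mem_nhds (by linarith))
  have h2 : ∀ᶠ n in atTop, v n < limsup v atTop + δ / 2 :=
    eventually_lt_of_limsup_lt (lt_add_of_pos_right _ (by linarith)) (myBddU hv)
  refine limsup_le_of_le (myCobdd hu) ?_
  filter_upwards [h1, h2] with n e1 e2
  linarith

lemma limsup_eq_limsup_of_tendsto_sub {u v : ℕ → ℝ} {C : ℝ}
    (hu : ∀ n, |u n| ≤ C) (hv : ∀ n, |v n| ≤ C)
    (h : Tendsto (fun n => u n - v n) atTop (𝓝 0)) :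
    limsup u atTop = limsup v atTop :=
  le_antisymm (limsup_le_limsup_of_tendsto_sub hu hv h)
    (limsup_le_limsup_of_tendsto_sub hv hu (by simpa using h.neg))

lemma real_sInf_neg (S : Set ℝ) : sInf (-S) = - sSup S := by
  simpa using Real.sInf_smul_of_nonpos (a := (-1:ℝ)) (neg_nonpos.mpr zero_le_one) S

lemma liminf_eq_neg_limsup_neg (u : ℕ → ℝ) :
    liminf u atTop = - limsup (fun n => - u n) atTop := by
  have hset : {a : ℝ | ∀ᶠ n in atTop, - u n ≤ a} = -{a : ℝ | ∀ᶠ n in atTop, a ≤ u n} := by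
    ext a; simp only [Set.mem_neg, Set.mem_setOf_eq, neg_le]
  rw [limsup_eq, liminf_eq, hset, real_sInf_neg, neg_neg]

lemma birkhoff_eq (φ : M → M) (f : M → ℝ) (n : ℕ) (x : M) :
    birkhoff φ f n x = birkhoffSum φ f n x := rfl

lemma birkhoff_succ' (φ : M → M) (f : M → ℝ) (n : ℕ) (x : M) :
    birkhoff φ f (n + 1) x = f x + birkhoff φ f n (φ x) := birkhoffSum_succ' φ f n x

lemma birkhoff_add (φ : M → M) (f : M → ℝ) (m n : ℕ) (x : M) :
    birkhoff φ f (m + n) x = birkhoff φ f m x + birkhoff φ f n (φ^[m] x) :=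
  birkhoffSum_add φ f m n x

lemma birkhoff_abs_le {φ : M → M} {f : M → ℝ} {C : ℝ} (hC : ∀ x, |f x| ≤ C)
    (n : ℕ) (x : M) : |birkhoff φ f n x| ≤ n * C := by
  calc |birkhoff φ f n x| ≤ ∑ j ∈ Finset.range n, |f (φ^[j] x)| :=
        Finset.abs_sum_le_sum_abs _ _
    _ ≤ ∑ j ∈ Finset.range n, C := Finset.sum_le_sum fun j _ => hC _
    _ = n * C := by simp [mul_comm]

lemma birkhoff_mono {φ : M → M} {f g : M → ℝ} (h : ∀ x, f x ≤ g x) (n : ℕ) (x : M) :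
    birkhoff φ f n x ≤ birkhoff φ g n x :=
  Finset.sum_le_sum fun j _ => h _

lemma birkhoff_measurable {φ : M → M} (hφ : Measurable φ) {f : M → ℝ} (hf : Measurable f)
    (n : ℕ) : Measurable (birkhoff φ f n) :=
  Finset.measurable_sum _ fun j _ => hf.comp (hφ.iterate j)

lemma avg_abs_le {φ : M → M} {f : M → ℝ} {C : ℝ} (hC0 : 0 ≤ C) (hC : ∀ x, |f x| ≤ C)
    (n : ℕ) (x : M) : |(n : ℝ)⁻¹ * birkhoff φ f n x| ≤ C := by
  rcases Nat.eq_zero_or_pos n with rfl | hn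
  · simp [birkhoff, hC0]
  · have hn' : (0:ℝ) < n := by exact_mod_cast hn
    rw [abs_mul, abs_inv, abs_of_pos hn']
    calc (n:ℝ)⁻¹ * |birkhoff φ f n x| ≤ (n:ℝ)⁻¹ * (n * C) := by
          exact mul_le_mul_of_nonneg_left (birkhoff_abs_le hC n x) (by positivity)
      _ = C := by field_simp

lemma limsup_avg_comp {φ : M → M} {f : M → ℝ} {C : ℝ} (hC0 : 0 ≤ C) (hC : ∀ x, |f x| ≤ C)
    (x : M) :
    limsup (fun n : ℕ => (n:ℝ)⁻¹ * birkhoff φ f n (φ x)) atTop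
      = limsup (fun n : ℕ => (n:ℝ)⁻¹ * birkhoff φ f n x) atTop := by
  set u : ℕ → ℝ := fun n => (n:ℝ)⁻¹ * birkhoff φ f n x with hu
  set v : ℕ → ℝ := fun n => (n:ℝ)⁻¹ * birkhoff φ f n (φ x) with hv
  have hub : ∀ n, |u n| ≤ C := fun n => avg_abs_le hC0 hC n x
  have hvb : ∀ n, |v n| ≤ C := fun n => avg_abs_le hC0 hC n (φ x)
  have key : Tendsto (fun n => v n - u (n + 1)) atTop (𝓝 0) := by
    apply squeeze_zero_norm' (a := fun n : ℕ => 2 * C / n) ?_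
      (tendsto_const_div_atTop_nhds_zero_nat (2 * C))
    · filter_upwards [eventually_ge_atTop 1] with n hn
      have hn' : (1:ℝ) ≤ (n:ℝ) := by exact_mod_cast hn
      have hn0 : (0:ℝ) < n := by linarith
      set s := birkhoff φ f n (φ x) with hs
      have hsb : |s| ≤ n * C := birkhoff_abs_le hC n (φ x)
      have hfx : |f x| ≤ C := hC x
      have hexp : v n - u (n + 1) = ((n:ℝ)⁻¹ - ((n:ℝ)+1)⁻¹) * s - ((n:ℝ)+1)⁻¹ * f x := by
        simp only [hu, hv, birkhoff_succ' φ f n x]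
        push_cast
        ring
      rw [Real.norm_eq_abs, hexp]
      have h1 : |((n:ℝ)⁻¹ - ((n:ℝ)+1)⁻¹) * s| ≤ C / n := by
        rw [abs_mul]
        have e : |(n:ℝ)⁻¹ - ((n:ℝ)+1)⁻¹| = (n:ℝ)⁻¹ - ((n:ℝ)+1)⁻¹ := by
          rw [abs_of_nonneg]
          rw [sub_nonneg]
          exact inv_anti₀ hn0 (by linarith)
        rw [e]
        calc ((n:ℝ)⁻¹ - ((n:ℝ)+1)⁻¹) * |s| ≤ ((n:ℝ)⁻¹ - ((n:ℝ)+1)⁻¹) * (n * C) := by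
              apply mul_le_mul_of_nonneg_left hsb
              rw [sub_nonneg]
              exact inv_anti₀ hn0 (by linarith)
          _ = C / ((n:ℝ)+1) := by field_simp; ring
          _ ≤ C / n := by gcongr <;> linarith
      have h2 : |((n:ℝ)+1)⁻¹ * f x| ≤ C / n := by
        rw [abs_mul, abs_inv, abs_of_pos (by linarith : (0:ℝ) < (n:ℝ)+1)]
        calc ((n:ℝ)+1)⁻¹ * |f x| ≤ (n:ℝ)⁻¹ * C := by
              apply mul_le_mul (inv_anti₀ hn0 (by linarith)) hfx (abs_nonneg _)
              positivity
          _ = C / n := by rw [div_eq_mul_inv]; ring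
      calc |((n:ℝ)⁻¹ - ((n:ℝ)+1)⁻¹) * s - ((n:ℝ)+1)⁻¹ * f x|
          ≤ |((n:ℝ)⁻¹ - ((n:ℝ)+1)⁻¹) * s| + |((n:ℝ)+1)⁻¹ * f x| := abs_sub _ _
        _ ≤ C / n + C / n := add_le_add h1 h2
        _ = 2 * C / n := by ring
  calc limsup v atTop = limsup (fun n => u (n + 1)) atTop :=
        limsup_eq_limsup_of_tendsto_sub hvb (fun n => hub (n + 1)) key
    _ = limsup u atTop := limsup_nat_add u 1

lemma myIntegrable {Q : Measure M} [IsFiniteMeasure Q] {g : M → ℝ} (hg : Measurable g)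
    {C : ℝ} (hC : ∀ x, |g x| ≤ C) : Integrable g Q :=
  ⟨hg.aestronglyMeasurable,
    HasFiniteIntegral.of_bounded (C := C) (Eventually.of_forall fun x => by
      simpa [Real.norm_eq_abs] using hC x)⟩

lemma int_comp_iterate {φ : M → M} (hφ : Measurable φ) {Q : Measure M}
    (hQ : MeasurePreserving φ Q Q) {g : M → ℝ} (hg : Measurable g) (j : ℕ) :
    ∫ x, g (φ^[j] x) ∂Q = ∫ x, g x ∂Q := by
  have h := (hQ.iterate j).map_eq
  calc ∫ x, g (φ^[j] x) ∂Q
      = ∫ y, g y ∂(Measure.map (φ^[j]) Q) :=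
        (integral_map (hφ.iterate j).aemeasurable
          (by rw [h]; exact hg.aestronglyMeasurable)).symm
    _ = ∫ x, g x ∂Q := by rw [h]

lemma integral_birkhoff {φ : M → M} (hφ : Measurable φ) {Q : Measure M} [IsFiniteMeasure Q]
    (hQ : MeasurePreserving φ Q Q) {g : M → ℝ} (hg : Measurable g)
    {C : ℝ} (hC : ∀ x, |g x| ≤ C) (m : ℕ) :
    ∫ x, birkhoff φ g m x ∂Q = m * ∫ x, g x ∂Q := by
  have hint : ∀ j : ℕ, Integrable (fun x => g (φ^[j] x)) Q := fun j =>
    myIntegrable (hg.comp (hφ.iterate j)) (fun x => hC _)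
  calc ∫ x, birkhoff φ g m x ∂Q = ∑ j ∈ Finset.range m, ∫ x, g (φ^[j] x) ∂Q :=
        integral_finset_sum _ (fun j _ => hint j)
    _ = ∑ j ∈ Finset.range m, ∫ x, g x ∂Q :=
        Finset.sum_congr rfl fun j _ => int_comp_iterate hφ hQ hg j
    _ = m * ∫ x, g x ∂Q := by simp [mul_comm]

lemma exists_limsup_const_le_integral
    {φ : M → M} (hφ : Measurable φ) {Q : Measure M} [IsProbabilityMeasure Q]
    (hQ : Ergodic φ Q) {f : M → ℝ} (hf : Measurable f) {C : ℝ} (hC0 : 0 ≤ C)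
    (hC : ∀ x, |f x| ≤ C) :
    ∃ c : ℝ, (∀ᵐ x ∂Q, limsup (fun n : ℕ => (n:ℝ)⁻¹ * birkhoff φ f n x) atTop = c) ∧
      c ≤ ∫ x, f x ∂Q := by
  classical
  set A : ℕ → M → ℝ := fun n x => (n:ℝ)⁻¹ * birkhoff φ f n x with hA
  have hAmeas : ∀ n, Measurable (A n) := fun n =>
    (birkhoff_measurable hφ hf n).const_mul _
  have hFmeas : Measurable (fun x => limsup (fun n => A n x) atTop) :=
    Measurable.limsup (fun n => hAmeas n)
  have hFinv : (fun x => limsup (fun n => A n x) atTop) ∘ φ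
      = fun x => limsup (fun n => A n x) atTop :=
    funext fun x => limsup_avg_comp hC0 hC x
  obtain ⟨c, hc⟩ := hQ.toPreErgodic.ae_eq_const_of_ae_eq_comp hFmeas hFinv
  refine ⟨c, hc, ?_⟩
  have hintf : Integrable f Q := myIntegrable hf hC
  refine le_of_forall_pos_le_add fun δ hδ => ?_
  set C' : ℝ := C + |c| + 1 with hC'
  have hC'1 : 1 ≤ C' := by nlinarith [abs_nonneg c]
  set ε : ℝ := min 1 (δ / (2 * C' + 1)) with hε
  have hεpos : 0 < ε := lt_min one_pos (by positivity)
  have hε1 : ε ≤ 1 := min_le_left _ _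
  have habsc : |c - ε| ≤ C' := by
    calc |c - ε| ≤ |c| + |ε| := abs_sub _ _
      _ ≤ |c| + 1 := by rw [abs_of_pos hεpos]; linarith
      _ ≤ C' := by linarith
  suffices h : c - ε ≤ (∫ x, f x ∂Q) + 2 * C' * ε by
    have h2 : (2 * C' + 1) * ε ≤ δ := by
      calc (2*C'+1) * ε ≤ (2*C'+1) * (δ/(2*C'+1)) := by
            apply mul_le_mul_of_nonneg_left (min_le_right _ _); linarith
        _ = δ := by field_simp
    linarith
  -- a.e. stopping time exists
  have hae : ∀ᵐ x ∂Q, ∃ n : ℕ, 1 ≤ n ∧ (n:ℝ) * (c - ε) ≤ birkhoff φ f n x := by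
    filter_upwards [hc] with x hx
    have hfreq : ∃ᶠ n in atTop, c - ε < A n x := by
      apply frequently_lt_of_lt_limsup (myCobdd (fun n => avg_abs_le hC0 hC n x))
      rw [show limsup (fun n => A n x) atTop = c from hx]
      linarith
    obtain ⟨n, hlt, hn1⟩ := (hfreq.and_eventually (eventually_ge_atTop 1)).exists
    have hn0 : (0:ℝ) < n := by exact_mod_cast hn1
    refine ⟨n, hn1, ?_⟩
    have heq : (n:ℝ) * A n x = birkhoff φ f n x := by
      simp only [hA]; field_simp
    nlinarith
  -- good sets
  set Gd : ℕ → Set M := fun N => ⋃ n ∈ Icc 1 N, {x | (n:ℝ) * (c - ε) ≤ birkhoff φ f n x}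
    with hGd
  have hGdmeas : ∀ N, MeasurableSet (Gd N) := fun N =>
    MeasurableSet.biUnion (to_countable _) fun n _ =>
      measurableSet_le measurable_const (birkhoff_measurable hφ hf n)
  have hGdmono : Monotone Gd := fun a b hab =>
    Set.biUnion_subset_biUnion_left (Icc_subset_Icc_right hab)
  have hQU : Q (⋃ N, Gd N) = 1 := by
    rw [← prob_compl_eq_zero_iff (MeasurableSet.iUnion hGdmeas)]
    have hmem : ∀ᵐ x ∂Q, x ∈ ⋃ N, Gd N := by
      filter_upwards [hae] with x hx
      obtain ⟨n, hn1, hnx⟩ := hx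
      exact mem_iUnion.2 ⟨n, mem_biUnion (mem_Icc.mpr ⟨hn1, le_refl n⟩) hnx⟩
    rw [Set.compl_def]
    exact ae_iff.mp hmem
  -- choose N
  have htend : Tendsto (fun N => Q (Gd N)) atTop (𝓝 1) := by
    rw [← hQU]
    exact tendsto_measure_iUnion_atTop hGdmono
  have hlt : (1 : ℝ≥0∞) - ENNReal.ofReal ε < 1 :=
    ENNReal.sub_lt_self ENNReal.one_ne_top one_ne_zero
      (by simpa using ENNReal.ofReal_pos.mpr hεpos)
  obtain ⟨N, hNbig, hN1⟩ :=
    ((htend.eventually (lt_mem_nhds hlt)).and (eventually_ge_atTop 1)).exists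
  have hcompl : (Q (Gd N)ᶜ).toReal ≤ ε := by
    have h1 : Q (Gd N)ᶜ = 1 - Q (Gd N) := prob_compl_eq_one_sub (hGdmeas N)
    have h2 : Q (Gd N)ᶜ ≤ ENNReal.ofReal ε := by
      rw [h1, tsub_le_iff_right]
      calc (1:ℝ≥0∞) ≤ ENNReal.ofReal ε + (1 - ENNReal.ofReal ε) := le_add_tsub
        _ ≤ ENNReal.ofReal ε + Q (Gd N) := by
            exact add_le_add le_rfl hNbig.le
    exact ENNReal.toReal_le_of_le_ofReal hεpos.le h2
  -- modified function
  set f' : M → ℝ := (Gd N).piecewise f (fun x => max (f x) (c - ε)) with hf'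
  have hf'meas : Measurable f' :=
    Measurable.piecewise (hGdmeas N) hf (hf.max measurable_const)
  have hfle : ∀ x, f x ≤ f' x := fun x => by
    by_cases hx : x ∈ Gd N <;> simp [hf', Set.piecewise, hx, le_max_left]
  have habs : ∀ x, |f' x| ≤ C' := fun x => by
    by_cases hx : x ∈ Gd N
    · simp only [hf', Set.piecewise, hx, if_pos]
      calc |f x| ≤ C := hC x
        _ ≤ C' := by linarith [abs_nonneg c]
    · simp only [hf', Set.piecewise, hx, if_neg, if_false]
      calc |max (f x) (c - ε)| ≤ max |f x| |c - ε| := abs_max_le_max_abs_abs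
        _ ≤ C' := max_le ((hC x).trans (by linarith [abs_nonneg c])) habsc
  -- stopping bound valid everywhere for f'
  have hstop : ∀ x, ∃ n, 1 ≤ n ∧ n ≤ N ∧ (n:ℝ) * (c - ε) ≤ birkhoff φ f' n x := by
    intro x
    by_cases hx : x ∈ Gd N
    · simp only [hGd, mem_iUnion, mem_Icc, mem_setOf_eq] at hx
      obtain ⟨n, ⟨hn1, hnN⟩, hnx⟩ := hx
      exact ⟨n, hn1, hnN, hnx.trans (birkhoff_mono hfle n x)⟩
    · refine ⟨1, le_refl 1, hN1, ?_⟩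
      have h1 : birkhoff φ f' 1 x = f' x := by simp [birkhoff]
      have h2 : f' x = max (f x) (c - ε) := by simp [hf', Set.piecewise, hx]
      rw [h1, h2]
      simpa using le_max_right (f x) (c - ε)
  -- key inductive estimate
  set B : ℝ := N * (2 * C') with hB
  have key : ∀ m : ℕ, ∀ x, (m:ℝ) * (c - ε) - B ≤ birkhoff φ f' m x := by
    intro m
    induction m using Nat.strong_induction_on with
    | _ m ih =>
      intro x
      by_cases hm : m ≤ N
      · have hmC : (m:ℝ) ≤ N := by exact_mod_cast hm
        have h1 := (abs_le.1 (birkhoff_abs_le (φ := φ) habs m x)).1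
        have h2 := abs_le.1 habsc
        have hm0 : (0:ℝ) ≤ m := Nat.cast_nonneg m
        nlinarith [hC'1]
      · push_neg at hm
        obtain ⟨n, hn1, hnN, hns⟩ := hstop x
        have hnm : n ≤ m := hnN.trans hm.le
        have hsplit : birkhoff φ f' m x
            = birkhoff φ f' n x + birkhoff φ f' (m - n) (φ^[n] x) := by
          conv_lhs => rw [show m = n + (m - n) from (Nat.add_sub_cancel' hnm).symm]
          exact birkhoff_add φ f' n (m - n) x
        have hih := ih (m - n) (by omega) (φ^[n] x)
        have hcast : ((m - n : ℕ) : ℝ) = (m:ℝ) - n := by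
          rw [Nat.cast_sub hnm]
        rw [hcast] at hih
        have hring : (m:ℝ) * (c - ε) = (n:ℝ) * (c - ε) + ((m:ℝ) - n) * (c - ε) := by ring
        rw [hsplit]
        linarith
  -- integrate
  have hint' : Integrable f' Q := myIntegrable hf'meas habs
  have hbirkint : ∀ m : ℕ, (m:ℝ) * (c - ε) - B ≤ (m:ℝ) * ∫ x, f' x ∂Q := by
    intro m
    rw [← integral_birkhoff hφ hQ.toMeasurePreserving hf'meas habs m]
    have hci : ∫ _x, ((m:ℝ) * (c - ε) - B) ∂Q = (m:ℝ) * (c - ε) - B := by simp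
    rw [← hci]
    exact integral_mono (integrable_const _)
      (myIntegrable (birkhoff_measurable hφ hf'meas m) (birkhoff_abs_le (φ := φ) habs m))
      (fun x => key m x)
  have hfinal : c - ε ≤ ∫ x, f' x ∂Q := by
    have hlim : Tendsto (fun m : ℕ => (c - ε) - B / m) atTop (𝓝 (c - ε)) := by
      simpa using tendsto_const_nhds.sub (tendsto_const_div_atTop_nhds_zero_nat B)
    refine le_of_tendsto hlim ?_
    filter_upwards [eventually_ge_atTop 1] with m hm
    have hm0 : (0:ℝ) < m := by exact_mod_cast hm
    have h1 := hbirkint m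
    have h2 : (m:ℝ) * ((c - ε) - B / m) = (m:ℝ) * (c - ε) - B := by field_simp
    have h3 : (m:ℝ) * ((c - ε) - B / m) ≤ (m:ℝ) * ∫ x, f' x ∂Q := by rw [h2]; exact h1
    exact (mul_le_mul_iff_right₀ hm0).mp h3
  -- upper bound on ∫ f'
  have hupper : ∫ x, f' x ∂Q ≤ (∫ x, f x ∂Q) + 2 * C' * (Q (Gd N)ᶜ).toReal := by
    have hindint : Integrable (((Gd N)ᶜ).indicator (fun _ => 2 * C')) Q :=
      (integrable_const (2 * C')).indicator (hGdmeas N).compl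
    have hptw : ∀ x, f' x ≤ f x + ((Gd N)ᶜ).indicator (fun _ => 2 * C') x := by
      intro x
      by_cases hx : x ∈ Gd N
      · rw [Set.indicator_of_notMem (by simpa using hx)]
        simp [hf', Set.piecewise, hx]
      · rw [Set.indicator_of_mem (by simpa using hx)]
        have h1 : f' x ≤ C' := (abs_le.1 (habs x)).2
        have h2 : -C ≤ f x := (abs_le.1 (hC x)).1
        have h3 : C ≤ C' := by linarith [abs_nonneg c]
        linarith
    calc ∫ x, f' x ∂Q ≤ ∫ x, (f x + ((Gd N)ᶜ).indicator (fun _ => 2 * C') x) ∂Q :=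
          integral_mono hint' (hintf.add hindint) hptw
      _ = (∫ x, f x ∂Q) + ∫ x, ((Gd N)ᶜ).indicator (fun _ => 2 * C') x ∂Q :=
          integral_add hintf hindint
      _ = (∫ x, f x ∂Q) + 2 * C' * (Q (Gd N)ᶜ).toReal := by
          rw [integral_indicator_const _ (hGdmeas N).compl]
          simp [mul_comm]
          exact Or.inl rfl
  have h2C' : (0:ℝ) ≤ 2 * C' := by linarith
  calc c - ε ≤ ∫ x, f' x ∂Q := hfinal
    _ ≤ (∫ x, f x ∂Q) + 2 * C' * (Q (Gd N)ᶜ).toReal := hupper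
    _ ≤ (∫ x, f x ∂Q) + 2 * C' * ε := by
        have := mul_le_mul_of_nonneg_left hcompl h2C'
        linarith

lemma birkhoff_ae {φ : M → M} (hφ : Measurable φ) {Q : Measure M} [IsProbabilityMeasure Q]
    (hQ : Ergodic φ Q) {f : M → ℝ} (hf : Measurable f) {C : ℝ} (hC : ∀ x, |f x| ≤ C) :
    ∀ᵐ x ∂Q, Tendsto (fun n : ℕ => (n:ℝ)⁻¹ * birkhoff φ f n x) atTop
      (𝓝 (∫ x, f x ∂Q)) := by
  set C0 : ℝ := max C 0 with hC0def
  have hC0 : 0 ≤ C0 := le_max_right _ _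
  have hCb : ∀ x, |f x| ≤ C0 := fun x => (hC x).trans (le_max_left _ _)
  have hCnb : ∀ x, |(fun y => - f y) x| ≤ C0 := fun x => by
    simpa [abs_neg] using hCb x
  obtain ⟨c, hc, hcle⟩ := exists_limsup_const_le_integral hφ hQ hf hC0 hCb
  obtain ⟨c₂, hc₂, hcle₂⟩ := exists_limsup_const_le_integral (f := fun y => - f y) hφ hQ hf.neg hC0 hCnb
  have hintneg : ∫ x, (fun y => - f y) x ∂Q = - ∫ x, f x ∂Q := integral_neg f
  rw [hintneg] at hcle₂
  filter_upwards [hc, hc₂] with x hx hx₂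
  set u : ℕ → ℝ := fun n => (n:ℝ)⁻¹ * birkhoff φ f n x with hu
  have hub : ∀ n, |u n| ≤ C0 := fun n => avg_abs_le hC0 hCb n x
  have hbneg : ∀ n : ℕ, birkhoff φ (fun y => - f y) n x = - birkhoff φ f n x := fun n => by
    simp [birkhoff]
  have hnegu : (fun n : ℕ => (n:ℝ)⁻¹ * birkhoff φ (fun y => - f y) n x)
      = fun n => - u n := by
    funext n; rw [hbneg n]; simp [hu]
  have hliminf : liminf u atTop = -c₂ := by
    rw [liminf_eq_neg_limsup_neg u, ← hnegu, hx₂]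
  have hlimsup : limsup u atTop = c := hx
  have hle : liminf u atTop ≤ limsup u atTop := liminf_le_limsup (myBddU hub) (myBddL hub)
  have h1 : -c₂ ≤ c := by rw [← hliminf, ← hlimsup]; exact hle
  have heq1 : c = ∫ x, f x ∂Q := le_antisymm hcle (by linarith)
  have heq2 : -c₂ = ∫ x, f x ∂Q := le_antisymm (by linarith) (by linarith)
  exact tendsto_of_liminf_eq_limsup (by rw [hliminf, heq2]) (by rw [hlimsup, heq1])
    (myBddU hub) (myBddL hub)

end AAETAux

/-- **Ergodic theorem for asymptotically additive sequences (Lemma 5.3).**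
If `Q` is a `φ`-ergodic Borel probability measure and `G = {G_n}` is asymptotically
additive, then for `Q`-almost every `x`, `(1/n) G_n(x) → G(Q)`, where
`G(Q) = lim_n (1/n) ∫ G_n dQ`. -/
theorem asympAdd_ergodic_theorem
    {M : Type*} [MetricSpace M] [CompactSpace M] [MeasurableSpace M] [BorelSpace M]
    (φ : M → M) (hφ : Continuous φ)
    (Q : Measure M) [IsProbabilityMeasure Q] (hQ : Ergodic φ Q)
    (G : ℕ → M → ℝ) (hG : AsympAdd φ G) :
    ∃ GQ : ℝ,
      Tendsto (fun n : ℕ => (n : ℝ)⁻¹ * ∫ x, G n x ∂Q) atTop (nhds GQ) ∧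
      ∀ᵐ x ∂Q, Tendsto (fun n : ℕ => (n : ℝ)⁻¹ * G n x) atTop (nhds GQ) := by
  classical
  obtain ⟨hGb, Gk, hGkc, happrox⟩ := hG
  have hφm : Measurable φ := hφ.measurable
  have hGkbd : ∀ k, ∃ Ck : ℝ, ∀ x, |Gk k x| ≤ Ck := fun k => by
    obtain ⟨Ck, hCk⟩ := isCompact_univ.exists_bound_of_continuousOn (hGkc k).continuousOn
    exact ⟨Ck, fun x => by simpa [Real.norm_eq_abs] using hCk x (mem_univ x)⟩
  set L : ℕ → ℝ := fun k => ∫ x, Gk k x ∂Q with hL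
  set a : ℕ → ℝ := fun n => (n:ℝ)⁻¹ * ∫ x, G n x ∂Q with ha
  -- pointwise ε-bound
  have hkey : ∀ δ : ℝ, 0 < δ → ∃ K : ℕ, ∀ k ≥ K, ∀ᶠ n : ℕ in atTop, ∀ x,
      |(n:ℝ)⁻¹ * G n x - (n:ℝ)⁻¹ * birkhoff φ (Gk k) n x| ≤ δ := by
    intro δ hδ
    have h1 : ∀ᶠ k in atTop, limsup
        (fun n => supNorm (fun x => G n x - birkhoff φ (Gk k) n x) / (n : ℝ≥0∞)) atTop
          < ENNReal.ofReal δ :=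
      happrox.eventually (gt_mem_nhds (ENNReal.ofReal_pos.mpr hδ))
    obtain ⟨K, hK⟩ := eventually_atTop.mp h1
    refine ⟨K, fun k hk => ?_⟩
    have h2 : ∀ᶠ n : ℕ in atTop,
        supNorm (fun x => G n x - birkhoff φ (Gk k) n x) / (n : ℝ≥0∞)
          < ENNReal.ofReal δ := eventually_lt_of_limsup_lt (hK k hk)
    filter_upwards [h2, eventually_ge_atTop 1] with n hn hn1 x
    have hnR : (0:ℝ) < n := by exact_mod_cast hn1
    have hn0 : (n : ℝ≥0∞) ≠ 0 := by
      simp only [ne_eq, Nat.cast_eq_zero]; omega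
    have hnt : (n : ℝ≥0∞) ≠ ∞ := ENNReal.natCast_ne_top n
    have h3 : supNorm (fun x => G n x - birkhoff φ (Gk k) n x) < ENNReal.ofReal δ * n :=
      (ENNReal.div_lt_iff (Or.inl hn0) (Or.inl hnt)).mp hn
    have h4 : ENNReal.ofReal |G n x - birkhoff φ (Gk k) n x| < ENNReal.ofReal (δ * n) := by
      calc ENNReal.ofReal |G n x - birkhoff φ (Gk k) n x|
          ≤ supNorm (fun x => G n x - birkhoff φ (Gk k) n x) :=
            le_iSup (fun y => ENNReal.ofReal |G n y - birkhoff φ (Gk k) n y|) x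
        _ < ENNReal.ofReal δ * n := h3
        _ = ENNReal.ofReal (δ * n) := by
            rw [← ENNReal.ofReal_natCast n, ← ENNReal.ofReal_mul hδ.le]
    have h5 : |G n x - birkhoff φ (Gk k) n x| ≤ δ * n :=
      le_of_lt ((ENNReal.ofReal_lt_ofReal_iff (by positivity)).mp h4)
    rw [← mul_sub, abs_mul, abs_inv, abs_of_pos hnR]
    calc (n:ℝ)⁻¹ * |G n x - birkhoff φ (Gk k) n x| ≤ (n:ℝ)⁻¹ * (δ * n) := by
          exact mul_le_mul_of_nonneg_left h5 (by positivity)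
      _ = δ := by field_simp
  -- integral version
  have hmean : ∀ k n : ℕ, 1 ≤ n → ∫ x, (n:ℝ)⁻¹ * birkhoff φ (Gk k) n x ∂Q = L k := by
    intro k n hn1
    obtain ⟨Ck, hCk⟩ := hGkbd k
    have hnR : (0:ℝ) < n := by exact_mod_cast hn1
    rw [integral_const_mul,
      integral_birkhoff hφm hQ.toMeasurePreserving (hGkc k).measurable hCk n]
    field_simp
    rfl
  have haint : ∀ δ : ℝ, 0 < δ → ∃ K : ℕ, ∀ k ≥ K, ∀ᶠ n : ℕ in atTop, |a n - L k| ≤ δ := by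
    intro δ hδ
    obtain ⟨K, hK⟩ := hkey δ hδ
    refine ⟨K, fun k hk => ?_⟩
    filter_upwards [hK k hk, eventually_ge_atTop 1] with n hn hn1
    obtain ⟨Ck, hCk⟩ := hGkbd k
    obtain ⟨hGnm, Cn, hCn⟩ := hGb n
    have hint1 : Integrable (fun x => (n:ℝ)⁻¹ * G n x) Q :=
      (myIntegrable hGnm hCn).const_mul _
    have hint2 : Integrable (fun x => (n:ℝ)⁻¹ * birkhoff φ (Gk k) n x) Q :=
      (myIntegrable (birkhoff_measurable hφm (hGkc k).measurable n)
        (birkhoff_abs_le (φ := φ) hCk n)).const_mul _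
    have heq : a n - L k
        = ∫ x, ((n:ℝ)⁻¹ * G n x - (n:ℝ)⁻¹ * birkhoff φ (Gk k) n x) ∂Q := by
      rw [integral_sub hint1 hint2, hmean k n hn1, integral_const_mul]
    rw [heq]
    have hnorm := norm_integral_le_of_norm_le_const
      (μ := Q) (C := δ)
      (f := fun x => (n:ℝ)⁻¹ * G n x - (n:ℝ)⁻¹ * birkhoff φ (Gk k) n x)
      (Eventually.of_forall fun x => by simpa [Real.norm_eq_abs] using hn x)
    simpa [Real.norm_eq_abs, measure_univ] using hnorm
  -- L is Cauchy
  have hLc : CauchySeq L := by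
    rw [Metric.cauchySeq_iff]
    intro ε hε
    obtain ⟨K, hK⟩ := haint (ε/3) (by linarith)
    refine ⟨K, fun m hm p hp => ?_⟩
    obtain ⟨j, hj1, hj2⟩ := ((hK m hm).and (hK p hp)).exists
    rw [Real.dist_eq]
    calc |L m - L p| ≤ |L m - a j| + |a j - L p| := abs_sub_le _ _ _
      _ ≤ ε/3 + ε/3 := add_le_add (by rw [abs_sub_comm]; exact hj1) hj2
      _ < ε := by linarith
  obtain ⟨GQ, hGQ⟩ := cauchySeq_tendsto_of_complete hLc
  have hLnear : ∀ δ : ℝ, 0 < δ → ∀ K : ℕ, ∃ k, K ≤ k ∧ |L k - GQ| < δ := by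
    intro δ hδ K
    obtain ⟨N, hN⟩ := Metric.tendsto_atTop.mp hGQ δ hδ
    exact ⟨max K N, le_max_left _ _, by
      have := hN (max K N) (le_max_right _ _); rwa [Real.dist_eq] at this⟩
  refine ⟨GQ, ?_, ?_⟩
  · rw [Metric.tendsto_atTop]
    intro ε hε
    obtain ⟨K, hK⟩ := haint (ε/3) (by linarith)
    obtain ⟨k, hkK, hkGQ⟩ := hLnear (ε/3) (by linarith) K
    obtain ⟨N, hN⟩ := eventually_atTop.mp (hK k hkK)
    refine ⟨N, fun n hn => ?_⟩
    rw [Real.dist_eq]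
    calc |a n - GQ| ≤ |a n - L k| + |L k - GQ| := abs_sub_le _ _ _
      _ < ε/3 + ε/3 := add_lt_add_of_le_of_lt (hN n hn) hkGQ
      _ < ε := by linarith
  · have hbirk : ∀ k : ℕ, ∀ᵐ x ∂Q, Tendsto
        (fun n : ℕ => (n:ℝ)⁻¹ * birkhoff φ (Gk k) n x) atTop (𝓝 (L k)) := fun k => by
      obtain ⟨Ck, hCk⟩ := hGkbd k
      exact birkhoff_ae hφm hQ (hGkc k).measurable hCk
    filter_upwards [ae_all_iff.mpr hbirk] with x hx
    rw [Metric.tendsto_atTop]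
    intro ε hε
    obtain ⟨K, hK⟩ := hkey (ε/4) (by linarith)
    obtain ⟨k, hkK, hkGQ⟩ := hLnear (ε/4) (by linarith) K
    have h2 : ∀ᶠ n : ℕ in atTop,
        |(n:ℝ)⁻¹ * birkhoff φ (Gk k) n x - L k| < ε/4 := by
      have := (hx k).eventually (Metric.ball_mem_nhds (L k) (by linarith : (0:ℝ) < ε/4))
      filter_upwards [this] with n hn
      simpa [Metric.mem_ball, Real.dist_eq] using hn
    obtain ⟨N, hN⟩ := eventually_atTop.mp ((hK k hkK).and h2)
    refine ⟨N, fun n hn => ?_⟩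
    obtain ⟨e1, e2⟩ := hN n hn
    rw [Real.dist_eq]
    calc |(n:ℝ)⁻¹ * G n x - GQ|
        ≤ |(n:ℝ)⁻¹ * G n x - (n:ℝ)⁻¹ * birkhoff φ (Gk k) n x|
          + |(n:ℝ)⁻¹ * birkhoff φ (Gk k) n x - GQ| := abs_sub_le _ _ _
      _ ≤ ε/4 + (|(n:ℝ)⁻¹ * birkhoff φ (Gk k) n x - L k| + |L k - GQ|) :=
          add_le_add (e1 x) (abs_sub_le _ _ _)
      _ < ε/4 + (ε/4 + ε/4) := by linarith
      _ < ε := by linarith
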